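/- Let H_1 and H_2 be regular graphs that are A-cospectral (so in particular they have the same number of vertices and the same degree of regularity), and let H be a regular graph. Then the T-edge neighbourhood coronas H_1 ⊟_T H and H_2 ⊟_T H are A-cospectral, and the T-edge neighbourhood coronas H ⊟_T H_1 and H ⊟_T H_2 are A-cospectral. -/

import Mathlib

open Finset Matrix Polynomial

/-- The vertex-edge incidence matrix `R(G)` of a graph `G`: rows indexed by vertices,
columns indexed by edges, with entry `1` exactly when the vertex is incident with the edge. -/
def incMat {V : Type*} [DecidableEq V] (G : SimpleGraph V) : Matrix V G.edgeSet ℝ :=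
  Matrix.of fun v e => if v ∈ (e : Sym2 V) then (1 : ℝ) else 0

/-- The `M`-coronal `Γ_M(x)`: the sum of all entries of `(xI - M)⁻¹`. -/
noncomputable def coronal {n : Type*} [Fintype n] [DecidableEq n]
    (M : Matrix n n ℝ) (x : ℝ) : ℝ :=
  ∑ i, ∑ j, (x • (1 : Matrix n n ℝ) - M)⁻¹ i j

/-- The T-vertex neighbourhood corona `G₁ ⊡_T G₂`: the disjoint union of the T-graph
`T(G₁)` (on `V₁ ⊕ E(G₁)`) and one copy of `G₂` for each vertex of `G₁`, where every
vertex of the `i`-th copy of `G₂` is joined to every neighbour of `vᵢ` in `T(G₁)`,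
i.e. to every vertex of `G₁` adjacent to `vᵢ` and to every edge of `G₁` incident with `vᵢ`. -/
def tVertexCorona {V₁ V₂ : Type*} (G₁ : SimpleGraph V₁) (G₂ : SimpleGraph V₂) :
    SimpleGraph (V₁ ⊕ (G₁.edgeSet ⊕ V₁ × V₂)) :=
  SimpleGraph.fromRel fun a b =>
    match a, b with
    | Sum.inl u, Sum.inl v => G₁.Adj u v
    | Sum.inl u, Sum.inr (Sum.inl e) => u ∈ (e : Sym2 V₁)
    | Sum.inl u, Sum.inr (Sum.inr iw) => G₁.Adj u iw.1
    | Sum.inr (Sum.inl e), Sum.inr (Sum.inl f) => ∃ v, v ∈ (e : Sym2 V₁) ∧ v ∈ (f : Sym2 V₁)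
    | Sum.inr (Sum.inl e), Sum.inr (Sum.inr iw) => iw.1 ∈ (e : Sym2 V₁)
    | Sum.inr (Sum.inr iw), Sum.inr (Sum.inr jw) => iw.1 = jw.1 ∧ G₂.Adj iw.2 jw.2
    | _, _ => False

/-- The T-edge neighbourhood corona `G₁ ⊟_T G₂`: the disjoint union of the T-graph
`T(G₁)` (on `V₁ ⊕ E(G₁)`) and one copy of `G₂` for each edge of `G₁`, where every
vertex of the `i`-th copy of `G₂` is joined to the two endpoints of the edge `eᵢ`
(as vertices of `G₁` inside `T(G₁)`). -/
def tEdgeCorona {V₁ V₂ : Type*} (G₁ : SimpleGraph V₁) (G₂ : SimpleGraph V₂) :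
    SimpleGraph (V₁ ⊕ (G₁.edgeSet ⊕ G₁.edgeSet × V₂)) :=
  SimpleGraph.fromRel fun a b =>
    match a, b with
    | Sum.inl u, Sum.inl v => G₁.Adj u v
    | Sum.inl u, Sum.inr (Sum.inl e) => u ∈ (e : Sym2 V₁)
    | Sum.inl u, Sum.inr (Sum.inr ew) => u ∈ (ew.1 : Sym2 V₁)
    | Sum.inr (Sum.inl e), Sum.inr (Sum.inl f) => ∃ v, v ∈ (e : Sym2 V₁) ∧ v ∈ (f : Sym2 V₁)
    | Sum.inr (Sum.inr ew), Sum.inr (Sum.inr fw) => ew.1 = fw.1 ∧ G₂.Adj ew.2 fw.2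
    | _, _ => False

noncomputable instance {V₁ V₂ : Type*} (G₁ : SimpleGraph V₁) (G₂ : SimpleGraph V₂) :
    DecidableRel (tVertexCorona G₁ G₂).Adj := Classical.decRel _

noncomputable instance {V₁ V₂ : Type*} (G₁ : SimpleGraph V₁) (G₂ : SimpleGraph V₂) :
    DecidableRel (tEdgeCorona G₁ G₂).Adj := Classical.decRel _

noncomputable instance {V : Type*} (G : SimpleGraph V) :
    DecidableRel (G.lineGraph).Adj := Classical.decRel _

set_option linter.unusedSectionVars false
set_option linter.unreachableTactic false
set_option linter.unusedTactic false
set_option maxHeartbeats 1000000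
section AUX
open Kronecker

section IncLemmas
variable {V : Type*} [Fintype V] [DecidableEq V] (G : SimpleGraph V) [DecidableRel G.Adj]

-- eigenvalue bound
lemma reg_isUnit_det {d : ℕ} (hreg : G.IsRegularOfDegree d) {x : ℝ} (hx : (d : ℝ) < x) :
    IsUnit (x • (1 : Matrix V V ℝ) - G.adjMatrix ℝ).det := by
  rw [isUnit_iff_ne_zero]
  intro hdet
  obtain ⟨v, hv, hmv⟩ := (Matrix.exists_mulVec_eq_zero_iff).2 hdet
  obtain ⟨i₀, hi₀⟩ := Function.ne_iff.1 hv
  obtain ⟨i, -, hi⟩ := Finset.exists_max_image Finset.univ (fun j => |v j|) ⟨i₀, mem_univ _⟩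
  have hvi : 0 < |v i| := lt_of_lt_of_le (abs_pos.2 hi₀) (hi i₀ (mem_univ _))
  have h1 : x * v i = ∑ j ∈ G.neighborFinset i, v j := by
    have := congrFun hmv i
    simp only [Matrix.sub_mulVec, Pi.sub_apply, Matrix.smul_mulVec, Matrix.one_mulVec,
      Pi.smul_apply, smul_eq_mul, SimpleGraph.adjMatrix_mulVec_apply, Pi.zero_apply] at this
    linarith
  have h2 : x * |v i| ≤ (d : ℝ) * |v i| := by
    calc x * |v i| = |x * v i| := by
          rw [abs_mul, abs_of_pos (lt_of_le_of_lt (Nat.cast_nonneg d) hx)]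
      _ = |∑ j ∈ G.neighborFinset i, v j| := by rw [h1]
      _ ≤ ∑ j ∈ G.neighborFinset i, |v j| := Finset.abs_sum_le_sum_abs _ _
      _ ≤ ∑ _j ∈ G.neighborFinset i, |v i| :=
          Finset.sum_le_sum fun j _ => hi j (mem_univ _)
      _ = (d : ℝ) * |v i| := by
          rw [Finset.sum_const, nsmul_eq_mul]
          congr 2
          exact hreg i
  nlinarith

lemma coronal_regular {d : ℕ} (hreg : G.IsRegularOfDegree d) {x : ℝ} (hx : (d : ℝ) < x) :
    (∑ i, ∑ j, (x • (1 : Matrix V V ℝ) - G.adjMatrix ℝ)⁻¹ i j)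
      = (Fintype.card V : ℝ) / (x - d) := by
  have hu := reg_isUnit_det G hreg hx
  set B := x • (1 : Matrix V V ℝ) - G.adjMatrix ℝ with hB
  have hone : B *ᵥ (fun _ => (1 : ℝ)) = fun _ => (x - d) := by
    funext i
    simp only [hB, Matrix.sub_mulVec, Pi.sub_apply, Matrix.smul_mulVec,
      Matrix.one_mulVec, Pi.smul_apply, smul_eq_mul, mul_one]
    rw [show (fun _ : V => (1:ℝ)) = Function.const V (1:ℝ) from rfl,
      SimpleGraph.adjMatrix_mulVec_const_apply_of_regular hreg]
    ring
  have hinv : B⁻¹ *ᵥ (fun _ => (x - d : ℝ)) = fun _ => (1 : ℝ) := by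
    rw [← hone, Matrix.mulVec_mulVec, Matrix.nonsing_inv_mul _ hu, Matrix.one_mulVec]
  have hxd : x - (d : ℝ) ≠ 0 := by linarith
  have hinv' : ∀ i, ∑ j, B⁻¹ i j = 1 / (x - d) := by
    intro i
    have := congrFun hinv i
    simp only [Matrix.mulVec, dotProduct] at this
    rw [eq_div_iff hxd, Finset.sum_mul]
    exact this
  rw [Finset.sum_congr rfl (fun i _ => hinv' i), Finset.sum_const, nsmul_eq_mul,
    Finset.card_univ]
  ring

-- auxiliary: cardinality of incident-edge filters
lemma card_filter_mem_incidence (u : V) :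
    (Finset.univ.filter (fun e : G.edgeSet => u ∈ (e : Sym2 V))).card = G.degree u := by
  rw [← SimpleGraph.card_incidenceFinset_eq_degree]
  apply Finset.card_bij (fun (e : G.edgeSet) _ => (e : Sym2 V))
  · intro e he
    rw [SimpleGraph.mem_incidenceFinset]
    exact ⟨e.2, (Finset.mem_filter.1 he).2⟩
  · intro e₁ h₁ e₂ h₂ h
    exact Subtype.ext h
  · intro f hf
    rw [SimpleGraph.mem_incidenceFinset] at hf
    exact ⟨⟨f, hf.1⟩, Finset.mem_filter.2 ⟨Finset.mem_univ _, hf.2⟩, rfl⟩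

-- R * Rᵀ = A + d • 1
lemma incMat_mul_transpose {d : ℕ} (hreg : G.IsRegularOfDegree d) :
    incMat G * (incMat G)ᵀ = G.adjMatrix ℝ + (d : ℝ) • 1 := by
  ext u v
  rw [Matrix.mul_apply]
  have hterm : ∀ e : G.edgeSet, incMat G u e * (incMat G)ᵀ e v
      = if u ∈ (e : Sym2 V) ∧ v ∈ (e : Sym2 V) then (1:ℝ) else 0 := by
    intro e
    simp only [incMat, Matrix.transpose_apply, Matrix.of_apply]
    by_cases h1 : u ∈ (e : Sym2 V) <;> by_cases h2 : v ∈ (e : Sym2 V) <;> simp [h1, h2]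
  rw [Finset.sum_congr rfl (fun e _ => hterm e), Finset.sum_boole]
  by_cases huv : u = v
  · subst huv
    simp only [and_self]
    rw [card_filter_mem_incidence G u, hreg u]
    simp [SimpleGraph.irrefl, Matrix.add_apply, Matrix.smul_apply, Matrix.one_apply]
  · rw [Matrix.add_apply, Matrix.smul_apply, Matrix.one_apply_ne huv, smul_eq_mul, mul_zero,
      add_zero, SimpleGraph.adjMatrix_apply]
    by_cases hadj : G.Adj u v
    · have hmem : s(u, v) ∈ G.edgeSet := G.mem_edgeSet.2 hadj
      have : Finset.univ.filter (fun e : G.edgeSet => u ∈ (e : Sym2 V) ∧ v ∈ (e : Sym2 V))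
          = {(⟨s(u,v), hmem⟩ : G.edgeSet)} := by
        ext e
        simp only [Finset.mem_filter, Finset.mem_univ, true_and, Finset.mem_singleton]
        rw [Sym2.mem_and_mem_iff huv, Subtype.ext_iff]
      rw [this]
      simp [hadj]
    · have : Finset.univ.filter (fun e : G.edgeSet => u ∈ (e : Sym2 V) ∧ v ∈ (e : Sym2 V))
          = ∅ := by
        ext e
        simp only [Finset.mem_filter, Finset.mem_univ, true_and, Finset.notMem_empty,
          iff_false]
        intro h
        rw [Sym2.mem_and_mem_iff huv] at h
        exact hadj (G.mem_edgeSet.1 (h ▸ e.2))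
      rw [this]
      simp [hadj]

-- Rᵀ * R entries
lemma transpose_incMat_mul (e f : G.edgeSet) :
    ((incMat G)ᵀ * incMat G) e f
      = (if e = f then (2:ℝ) else 0)
        + (if e ≠ f ∧ ∃ v, v ∈ (e : Sym2 V) ∧ v ∈ (f : Sym2 V) then 1 else 0) := by
  rw [Matrix.mul_apply]
  have hterm : ∀ v : V, (incMat G)ᵀ e v * incMat G v f
      = if v ∈ (e : Sym2 V) ∧ v ∈ (f : Sym2 V) then (1:ℝ) else 0 := by
    intro v
    simp only [incMat, Matrix.transpose_apply, Matrix.of_apply]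
    by_cases h1 : v ∈ (e : Sym2 V) <;> by_cases h2 : v ∈ (f : Sym2 V) <;> simp [h1, h2]
  rw [Finset.sum_congr rfl (fun v _ => hterm v), Finset.sum_boole]
  by_cases hef : e = f
  · subst hef
    simp only [and_self, if_pos rfl, ne_eq, not_true_eq_false, false_and, if_false, add_zero]
    obtain ⟨⟨a, b⟩, hab⟩ := Quot.exists_rep (e : Sym2 V)
    have hne : a ≠ b := by
      intro h
      apply G.not_isDiag_of_mem_edgeSet e.2
      rw [← hab, h]
      exact Sym2.mk_isDiag_iff.2 rfl
    have : Finset.univ.filter (fun v => v ∈ (e : Sym2 V)) = {a, b} := by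
      ext v
      simp only [Finset.mem_filter, Finset.mem_univ, true_and, Finset.mem_insert,
        Finset.mem_singleton, ← hab]
      exact Sym2.mem_iff
    rw [this, Finset.card_insert_of_notMem (by simp [hne]), Finset.card_singleton]
    norm_num
  · rw [if_neg hef, zero_add,
      if_congr (and_iff_right hef) (Eq.refl (1:ℝ)) (Eq.refl (0:ℝ))]
    by_cases hsh : ∃ v, v ∈ (e : Sym2 V) ∧ v ∈ (f : Sym2 V)
    · obtain ⟨v₀, hv₀⟩ := hsh
      have : Finset.univ.filter (fun v => v ∈ (e : Sym2 V) ∧ v ∈ (f : Sym2 V)) = {v₀} := by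
        ext w
        simp only [Finset.mem_filter, Finset.mem_univ, true_and, Finset.mem_singleton]
        constructor
        · rintro ⟨hw1, hw2⟩
          by_contra hwv
          apply hef
          have h1 : (e : Sym2 V) = s(w, v₀) := (Sym2.mem_and_mem_iff hwv).1 ⟨hw1, hv₀.1⟩
          have h2 : (f : Sym2 V) = s(w, v₀) := (Sym2.mem_and_mem_iff hwv).1 ⟨hw2, hv₀.2⟩
          exact Subtype.ext (h1.trans h2.symm)
        · rintro rfl
          exact hv₀
      rw [this, if_pos ⟨v₀, hv₀⟩, Finset.card_singleton, Nat.cast_one]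
    · have : Finset.univ.filter (fun v => v ∈ (e : Sym2 V) ∧ v ∈ (f : Sym2 V)) = ∅ := by
        ext w
        simp only [Finset.mem_filter, Finset.mem_univ, true_and, Finset.notMem_empty, iff_false]
        intro h
        exact hsh ⟨w, h⟩
      rw [this, if_neg hsh, Finset.card_empty, Nat.cast_zero]

end IncLemmas

variable {V₁ V₂ : Type*} [Fintype V₁] [DecidableEq V₁] [Fintype V₂] [DecidableEq V₂]
  (G₁ : SimpleGraph V₁) (G₂ : SimpleGraph V₂) [DecidableRel G₁.Adj] [DecidableRel G₂.Adj]

lemma tec_adj_inl_inl (u v : V₁) :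
    (tEdgeCorona G₁ G₂).Adj (Sum.inl u) (Sum.inl v) ↔ G₁.Adj u v := by
  constructor
  · rintro ⟨-, h | h⟩
    · exact h
    · exact h.symm
  · intro h
    exact ⟨by simp [h.ne], Or.inl h⟩

lemma tec_adj_inl_ine (u : V₁) (e : G₁.edgeSet) :
    (tEdgeCorona G₁ G₂).Adj (Sum.inl u) (Sum.inr (Sum.inl e)) ↔ u ∈ (e : Sym2 V₁) := by
  constructor
  · rintro ⟨-, h | h⟩
    · exact h
    · exact h.elim
  · intro h
    exact ⟨by simp, Or.inl h⟩

lemma tec_adj_inl_inc (u : V₁) (ew : G₁.edgeSet × V₂) :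
    (tEdgeCorona G₁ G₂).Adj (Sum.inl u) (Sum.inr (Sum.inr ew)) ↔ u ∈ (ew.1 : Sym2 V₁) := by
  constructor
  · rintro ⟨-, h | h⟩
    · exact h
    · exact h.elim
  · intro h
    exact ⟨by simp, Or.inl h⟩

lemma tec_adj_ine_ine (e f : G₁.edgeSet) :
    (tEdgeCorona G₁ G₂).Adj (Sum.inr (Sum.inl e)) (Sum.inr (Sum.inl f)) ↔
      e ≠ f ∧ ∃ v, v ∈ (e : Sym2 V₁) ∧ v ∈ (f : Sym2 V₁) := by
  constructor
  · rintro ⟨hne, h | h⟩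
    · exact ⟨by simpa using hne, h⟩
    · exact ⟨by simpa using hne, h.imp fun v hv => ⟨hv.2, hv.1⟩⟩
  · rintro ⟨hne, h⟩
    exact ⟨by simpa using hne, Or.inl h⟩

lemma tec_adj_ine_inc (e : G₁.edgeSet) (fw : G₁.edgeSet × V₂) :
    ¬ (tEdgeCorona G₁ G₂).Adj (Sum.inr (Sum.inl e)) (Sum.inr (Sum.inr fw)) := by
  rintro ⟨-, h | h⟩ <;> exact h

lemma tec_adj_inc_inc (ew fw : G₁.edgeSet × V₂) :
    (tEdgeCorona G₁ G₂).Adj (Sum.inr (Sum.inr ew)) (Sum.inr (Sum.inr fw)) ↔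
      ew.1 = fw.1 ∧ G₂.Adj ew.2 fw.2 := by
  constructor
  · rintro ⟨hne, h | h⟩
    · exact h
    · exact ⟨h.1.symm, h.2.symm⟩
  · rintro ⟨h1, h2⟩
    refine ⟨?_, Or.inl ⟨h1, h2⟩⟩
    simp only [ne_eq, Sum.inr.injEq]
    intro h
    exact h2.ne (congrArg Prod.snd h)

lemma tec_block (x : ℝ) :
    (x • (1 : Matrix _ _ ℝ) - (tEdgeCorona G₁ G₂).adjMatrix ℝ).submatrix
        (Equiv.sumAssoc V₁ G₁.edgeSet (G₁.edgeSet × V₂))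
        (Equiv.sumAssoc V₁ G₁.edgeSet (G₁.edgeSet × V₂))
      = fromBlocks
          (x • 1 - fromBlocks (G₁.adjMatrix ℝ) (incMat G₁) (incMat G₁)ᵀ
            ((incMat G₁)ᵀ * incMat G₁ - (2:ℝ) • 1))
          (-(fun p ew => Sum.elim (fun u => incMat G₁ u ew.1) (fun _ => (0:ℝ)) p))
          (-(fun ew p => Sum.elim (fun u => incMat G₁ u ew.1) (fun _ => (0:ℝ)) p))
          (x • 1 - (1 : Matrix G₁.edgeSet G₁.edgeSet ℝ) ⊗ₖ G₂.adjMatrix ℝ) := by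
  ext p q
  rcases p with (u | e) | ew <;> rcases q with (v | f) | fw <;>
    simp only [Matrix.fromBlocks, Matrix.of_apply, Sum.elim_inl, Sum.elim_inr] <;>
    simp only [Matrix.submatrix_apply, Equiv.sumAssoc_apply_inl_inl,
      Equiv.sumAssoc_apply_inl_inr, Equiv.sumAssoc_apply_inr, Matrix.sub_apply,
      Matrix.smul_apply, Matrix.one_apply, SimpleGraph.adjMatrix_apply,
      Matrix.fromBlocks_apply₁₁, Matrix.fromBlocks_apply₁₂, Matrix.fromBlocks_apply₂₁,
      Matrix.fromBlocks_apply₂₂, Matrix.neg_apply, Sum.elim_inl, Sum.elim_inr,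
      Matrix.kroneckerMap_apply, smul_eq_mul]
  · -- V,V
    simp [tec_adj_inl_inl, Sum.inl.injEq]
  · -- V,E
    simp [tec_adj_inl_ine, incMat]
  · -- V,C
    simp [tec_adj_inl_inc, incMat]
  · -- E,V
    have : (tEdgeCorona G₁ G₂).Adj (Sum.inr (Sum.inl e)) (Sum.inl v) ↔ v ∈ (e : Sym2 V₁) := by
      rw [(tEdgeCorona G₁ G₂).adj_comm]
      exact tec_adj_inl_ine G₁ G₂ v e
    simp [this, incMat]
  · -- E,E
    change _ = (x * if (Sum.inr e : V₁ ⊕ G₁.edgeSet) = Sum.inr f then 1 else 0) -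
      (((incMat G₁)ᵀ * incMat G₁) e f - (2:ℝ) * if e = f then 1 else 0)
    rw [transpose_incMat_mul G₁ e f]
    by_cases hef : e = f
    · subst hef
      simp [tec_adj_ine_ine]
    · have : (Sum.inr (Sum.inl e) : V₁ ⊕ (G₁.edgeSet ⊕ G₁.edgeSet × V₂)) ≠ Sum.inr (Sum.inl f) := by
        simp [hef]
      simp only [if_neg hef, if_neg this, tec_adj_ine_ine]
      by_cases hsh : ∃ v, v ∈ (e : Sym2 V₁) ∧ v ∈ (f : Sym2 V₁) <;>
        simp [hsh, hef] <;> ring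
  · -- E,C
    simp [tec_adj_ine_inc]
  · -- C,V
    have : (tEdgeCorona G₁ G₂).Adj (Sum.inr (Sum.inr ew)) (Sum.inl v) ↔ v ∈ (ew.1 : Sym2 V₁) := by
      rw [(tEdgeCorona G₁ G₂).adj_comm]
      exact tec_adj_inl_inc G₁ G₂ v ew
    simp [this, incMat]
  · -- C,E
    have : ¬ (tEdgeCorona G₁ G₂).Adj (Sum.inr (Sum.inr ew)) (Sum.inr (Sum.inl f)) := by
      rw [(tEdgeCorona G₁ G₂).adj_comm]
      exact tec_adj_ine_inc G₁ G₂ f ew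
    simp [this]
  · -- C,C
    rcases ew with ⟨e, w⟩; rcases fw with ⟨f, w'⟩
    simp only [tec_adj_inc_inc]
    by_cases hef : e = f <;> by_cases hww : w = w' <;>
      simp [hef, hww, Prod.ext_iff, Matrix.one_apply, SimpleGraph.adjMatrix_apply]

noncomputable def qAux (x r g : ℝ) : ℝ[X] :=
  (C (x + 2 - r) - X) * (C x - X - C g * (X + C r)) - (X + C r)

lemma my_eval_charpoly {n : Type*} [Fintype n] [DecidableEq n] {R : Type*} [CommRing R]
    (M : Matrix n n R) (x : R) :
    (M.charpoly).eval x = (x • (1 : Matrix n n R) - M).det := by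
  rw [Matrix.charpoly, ← Polynomial.coe_evalRingHom, RingHom.map_det]
  congr 1
  ext i j
  by_cases h : i = j <;>
    simp [charmatrix_apply, h, Matrix.one_apply, Matrix.smul_apply, Matrix.diagonal_apply]

section Key

variable {V₁ V₂ : Type*} [Fintype V₁] [DecidableEq V₁] [Fintype V₂] [DecidableEq V₂]
  (G₁ : SimpleGraph V₁) (G₂ : SimpleGraph V₂) [DecidableRel G₁.Adj] [DecidableRel G₂.Adj]

lemma tec_key (r : ℕ) (hreg : G₁.IsRegularOfDegree r) (x : ℝ)
    (hy : x + 2 ≠ 0)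
    (hT : IsUnit (x • (1 : Matrix V₂ V₂ ℝ) - G₂.adjMatrix ℝ).det)
    (hF : IsUnit (((x + 2 - r)) • (1 : Matrix V₁ V₁ ℝ) - G₁.adjMatrix ℝ).det) :
    (x+2) ^ (Fintype.card V₁) *
        Polynomial.eval x ((tEdgeCorona G₁ G₂).adjMatrix ℝ).charpoly
      = (Polynomial.eval x ((G₂.adjMatrix ℝ).charpoly)) ^ (Fintype.card G₁.edgeSet)
        * (x+2) ^ (Fintype.card G₁.edgeSet)
        * ((aeval (G₁.adjMatrix ℝ) (qAux x r (coronal (G₂.adjMatrix ℝ) x))).det) := by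
  classical
  set A₁ := G₁.adjMatrix ℝ with hA₁
  set A₂ := G₂.adjMatrix ℝ with hA₂
  set Rm := incMat G₁ with hRm
  set T : Matrix V₂ V₂ ℝ := x • 1 - A₂ with hTdef
  set Γ : ℝ := coronal A₂ x with hΓ
  set n := Fintype.card V₁ with hn
  set m := Fintype.card G₁.edgeSet with hm
  set K : Matrix (G₁.edgeSet × V₂) (G₁.edgeSet × V₂) ℝ :=
    x • 1 - (1 : Matrix G₁.edgeSet G₁.edgeSet ℝ) ⊗ₖ A₂ with hK
  set Bmat : Matrix (V₁ ⊕ G₁.edgeSet) (G₁.edgeSet × V₂) ℝ :=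
    (fun p ew => Sum.elim (fun u => incMat G₁ u ew.1) (fun _ => (0:ℝ)) p) with hBmat
  set Cmat : Matrix (G₁.edgeSet × V₂) (V₁ ⊕ G₁.edgeSet) ℝ :=
    (fun ew p => Sum.elim (fun u => incMat G₁ u ew.1) (fun _ => (0:ℝ)) p) with hCmat
  -- Step B : K = 1 ⊗ T and invertibility
  have hK1 : K = (1 : Matrix G₁.edgeSet G₁.edgeSet ℝ) ⊗ₖ T := by
    ext ⟨e, w⟩ ⟨f, w'⟩
    by_cases hef : e = f <;> by_cases hww : w = w' <;>
      simp [hK, hTdef, Matrix.sub_apply, Matrix.smul_apply, Matrix.one_apply,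
        Matrix.kroneckerMap_apply, hef, hww, Prod.ext_iff]
  have hKdet : K.det = T.det ^ m := by
    rw [hK1, Matrix.det_kronecker, Matrix.det_one, one_pow, one_mul, hm]
  have hKU : IsUnit K.det := by rw [hKdet]; exact hT.pow m
  haveI : Invertible K := K.invertibleOfIsUnitDet hKU
  have hKinv : K⁻¹ = (1 : Matrix G₁.edgeSet G₁.edgeSet ℝ) ⊗ₖ T⁻¹ := by
    apply Matrix.inv_eq_right_inv
    rw [hK1, ← Matrix.mul_kronecker_mul, Matrix.one_mul, Matrix.mul_nonsing_inv _ hT,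
      Matrix.one_kronecker_one]
  -- Step C : correction term
  have hcorr : Bmat * K⁻¹ * Cmat
      = fromBlocks (Γ • (Rm * Rmᵀ)) 0 0 0 := by
    rw [hKinv]
    have hrow0 : ∀ (e : G₁.edgeSet) (q : V₁ ⊕ G₁.edgeSet),
        (Bmat * ((1 : Matrix G₁.edgeSet G₁.edgeSet ℝ) ⊗ₖ T⁻¹) * Cmat) (Sum.inr e) q = 0 := by
      intro e q
      rw [Matrix.mul_apply]
      apply Finset.sum_eq_zero
      intro fw _
      rw [Matrix.mul_apply]
      simp [hBmat]
    have hcor1 : ∀ (u : V₁) (fw : G₁.edgeSet × V₂),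
        (Bmat * ((1 : Matrix G₁.edgeSet G₁.edgeSet ℝ) ⊗ₖ T⁻¹)) (Sum.inl u) fw
          = Rm u fw.1 * ∑ w, T⁻¹ w fw.2 := by
      intro u fw
      rw [Matrix.mul_apply, Fintype.sum_prod_type]
      have hterm : ∀ e : G₁.edgeSet,
          (∑ w, Bmat (Sum.inl u) (e, w) * ((1 : Matrix _ _ ℝ) ⊗ₖ T⁻¹) (e, w) fw)
            = if e = fw.1 then Rm u e * ∑ w, T⁻¹ w fw.2 else 0 := by
        intro e
        by_cases hef : e = fw.1
        · simp [hBmat, Matrix.kroneckerMap_apply, Matrix.one_apply, hef, Finset.mul_sum, hRm]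
        · simp [hBmat, Matrix.kroneckerMap_apply, Matrix.one_apply, hef]
      rw [Finset.sum_congr rfl fun e _ => hterm e, Finset.sum_ite_eq' Finset.univ fw.1]
      simp
    ext p q
    rcases p with u | e
    · rcases q with v | f
      · rw [Matrix.mul_apply]
        rw [Finset.sum_congr rfl fun fw _ => by rw [hcor1 u fw]]
        rw [Fintype.sum_prod_type]
        have hterm2 : ∀ f : G₁.edgeSet,
            (∑ w' : V₂, (Rm u f * ∑ w, T⁻¹ w w') * Cmat (f, w') (Sum.inl v))
              = (Rm u f * Rm v f) * (∑ w' : V₂, ∑ w, T⁻¹ w w') := by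
          intro f
          rw [Finset.mul_sum]
          refine Finset.sum_congr rfl fun w' _ => ?_
          simp only [hCmat, Sum.elim_inl, hRm]
          ring
        rw [Finset.sum_congr rfl fun f _ => hterm2 f, ← Finset.sum_mul]
        have hΓ2 : (∑ w' : V₂, ∑ w, T⁻¹ w w') = Γ := by
          rw [hΓ, coronal, Finset.sum_comm]
        rw [hΓ2]
        simp only [Matrix.fromBlocks_apply₁₁, Matrix.smul_apply, Matrix.mul_apply,
          Matrix.transpose_apply, smul_eq_mul, Finset.sum_mul]
        rw [Finset.mul_sum]
        refine Finset.sum_congr rfl fun f _ => ?_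
        ring
      · rw [Matrix.mul_apply]
        have : ∀ fw : G₁.edgeSet × V₂,
            (Bmat * ((1 : Matrix G₁.edgeSet G₁.edgeSet ℝ) ⊗ₖ T⁻¹)) (Sum.inl u) fw *
              Cmat fw (Sum.inr f) = 0 := by
          intro fw
          simp [hCmat]
        rw [Finset.sum_congr rfl fun fw _ => this fw]
        simp
    · rw [hrow0]
      rcases q with v | f <;> simp
  -- Step A : determinant via blocks
  have hsub : (x • (1 : Matrix _ _ ℝ) - (tEdgeCorona G₁ G₂).adjMatrix ℝ).submatrix
        (Equiv.sumAssoc V₁ G₁.edgeSet (G₁.edgeSet × V₂))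
        (Equiv.sumAssoc V₁ G₁.edgeSet (G₁.edgeSet × V₂))
      = fromBlocks (x • 1 - fromBlocks A₁ Rm Rmᵀ (Rmᵀ * Rm - (2:ℝ) • 1))
          (-Bmat) (-Cmat) K := tec_block G₁ G₂ x
  have hdetM : (x • (1 : Matrix _ _ ℝ) - (tEdgeCorona G₁ G₂).adjMatrix ℝ).det
      = K.det * ((x • 1 - fromBlocks A₁ Rm Rmᵀ (Rmᵀ * Rm - (2:ℝ) • 1))
          - Bmat * K⁻¹ * Cmat).det := by
    rw [← Matrix.det_submatrix_equiv_self
        (Equiv.sumAssoc V₁ G₁.edgeSet (G₁.edgeSet × V₂)) _, hsub]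
    rw [Matrix.det_fromBlocks₂₂, Matrix.invOf_eq_nonsing_inv]
    simp only [Matrix.neg_mul, Matrix.mul_neg, neg_neg]
  -- Step D : assemble inner blocks
  have hRRt : Rm * Rmᵀ = A₁ + (r : ℝ) • 1 := incMat_mul_transpose G₁ hreg
  set F : Matrix V₁ V₁ ℝ := (x + 2 - r) • 1 - A₁ with hFdef
  set D' : Matrix G₁.edgeSet G₁.edgeSet ℝ := (x + 2) • 1 - Rmᵀ * Rm with hD'
  have hassem : (x • 1 - fromBlocks A₁ Rm Rmᵀ (Rmᵀ * Rm - (2:ℝ) • 1)) - Bmat * K⁻¹ * Cmat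
      = fromBlocks (x • 1 - A₁ - Γ • (Rm * Rmᵀ)) (-Rm) (-Rmᵀ) D' := by
    rw [hcorr]
    have h1 : (x • (1 : Matrix (V₁ ⊕ G₁.edgeSet) (V₁ ⊕ G₁.edgeSet) ℝ))
        = fromBlocks (x • 1) 0 0 (x • 1) := by
      rw [← Matrix.fromBlocks_one, Matrix.fromBlocks_smul]
      simp only [smul_zero]
    rw [h1]
    ext p q
    rcases p with u | e <;> rcases q with v | f <;>
      simp [Matrix.fromBlocks_apply₁₁, Matrix.fromBlocks_apply₁₂, Matrix.fromBlocks_apply₂₁,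
        Matrix.fromBlocks_apply₂₂, Matrix.sub_apply, Matrix.smul_apply, Matrix.one_apply,
        Matrix.add_apply, hD', add_smul, smul_eq_mul] <;> ring
  -- Step E : determinant identities for D' and F
  have hFRR : F = (x + 2) • 1 - Rm * Rmᵀ := by
    rw [hFdef, hRRt, sub_smul, sub_sub, add_comm ((r:ℝ) • (1 : Matrix V₁ V₁ ℝ)) A₁]
  set c : ℝ := (1 - (x + 2)⁻¹ • (Rmᵀ * Rm)).det with hc
  have hswap : ((x+2) • (1 : Matrix V₁ V₁ ℝ)) * ((x+2)⁻¹ • (1 : Matrix V₁ V₁ ℝ)) = 1 := by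
    rw [Matrix.smul_mul, Matrix.mul_smul, Matrix.one_mul, smul_smul, mul_inv_cancel₀ hy,
      one_smul]
  have hxU : IsUnit ((x+2) • (1 : Matrix V₁ V₁ ℝ)).det := by
    rw [Matrix.det_smul, Matrix.det_one, mul_one]
    exact (isUnit_iff_ne_zero.2 (pow_ne_zero _ hy))
  haveI : Invertible ((x+2) • (1 : Matrix V₁ V₁ ℝ)) := Matrix.invertibleOfIsUnitDet _ hxU
  have hxinv : ((x+2) • (1 : Matrix V₁ V₁ ℝ))⁻¹ = (x+2)⁻¹ • 1 :=
    Matrix.inv_eq_right_inv hswap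
  have hdetF : F.det = (x+2) ^ n * c := by
    have h11 := Matrix.det_fromBlocks₁₁ ((x+2) • (1 : Matrix V₁ V₁ ℝ)) Rm Rmᵀ
      (1 : Matrix G₁.edgeSet G₁.edgeSet ℝ)
    haveI : Invertible (1 : Matrix G₁.edgeSet G₁.edgeSet ℝ) := invertibleOne
    have h22 := Matrix.det_fromBlocks₂₂ ((x+2) • (1 : Matrix V₁ V₁ ℝ)) Rm Rmᵀ
      (1 : Matrix G₁.edgeSet G₁.edgeSet ℝ)
    rw [h11] at h22
    rw [invOf_one, Matrix.mul_one, Matrix.invOf_eq_nonsing_inv, hxinv, Matrix.det_one,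
      one_mul] at h22
    have : Rmᵀ * ((x+2)⁻¹ • (1 : Matrix V₁ V₁ ℝ)) * Rm = (x+2)⁻¹ • (Rmᵀ * Rm) := by
      rw [Matrix.mul_smul, Matrix.mul_one, Matrix.smul_mul]
    rw [this] at h22
    rw [hFRR, ← h22, Matrix.det_smul, Matrix.det_one, mul_one, hc, hn]
  have hdetD' : D'.det = (x+2) ^ m * c := by
    have : D' = (x + 2) • (1 - (x+2)⁻¹ • (Rmᵀ * Rm)) := by
      rw [smul_sub, smul_smul, mul_inv_cancel₀ hy, one_smul, hD']
    rw [this, Matrix.det_smul, hc, hm]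
  have hcne : c ≠ 0 := by
    intro h0
    rw [hdetF, h0, mul_zero] at hF
    exact (by simpa using hF : IsUnit (0:ℝ)).ne_zero rfl
  have hD'U : IsUnit D'.det := by
    rw [hdetD']
    exact (isUnit_iff_ne_zero.2 (mul_ne_zero (pow_ne_zero _ hy) hcne))
  haveI : Invertible D' := Matrix.invertibleOfIsUnitDet _ hD'U
  -- Step F : second Schur complement
  set P' : Matrix V₁ V₁ ℝ := x • 1 - A₁ - Γ • (Rm * Rmᵀ) with hP'
  have hdet2 : (fromBlocks P' (-Rm) (-Rmᵀ) D').det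
      = D'.det * (P' - Rm * D'⁻¹ * Rmᵀ).det := by
    rw [Matrix.det_fromBlocks₂₂, Matrix.invOf_eq_nonsing_inv]
    simp only [Matrix.neg_mul, Matrix.mul_neg, neg_neg]
  have hFR : F * Rm = Rm * D' := by
    rw [hFRR, hD', Matrix.sub_mul, Matrix.mul_sub, Matrix.smul_mul, Matrix.one_mul,
      Matrix.mul_smul, Matrix.mul_one, Matrix.mul_assoc]
  have hRD : Rm * D'⁻¹ = F⁻¹ * Rm := by
    have h1 : F⁻¹ * (F * Rm) * D'⁻¹ = Rm * D'⁻¹ := by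
      rw [← Matrix.mul_assoc, Matrix.nonsing_inv_mul _ hF, Matrix.one_mul]
    have h2 : F⁻¹ * (Rm * D') * D'⁻¹ = F⁻¹ * Rm := by
      rw [Matrix.mul_assoc, Matrix.mul_assoc, Matrix.mul_nonsing_inv _ hD'U, Matrix.mul_one]
    rw [← h1, hFR, h2]
  have hFS : F * (P' - Rm * D'⁻¹ * Rmᵀ) = aeval A₁ (qAux x r Γ) := by
    rw [hRD, Matrix.mul_assoc, Matrix.mul_sub, ← Matrix.mul_assoc F (F⁻¹) _,
      Matrix.mul_nonsing_inv _ hF, Matrix.one_mul]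
    rw [qAux]
    simp only [map_sub, _root_.map_mul, map_add, aeval_X, aeval_C,
      Algebra.algebraMap_eq_smul_one]
    rw [hP', hRRt]
    rw [smul_one_mul]
    rw [hFdef]
    congr 1
    congr 1
    module
  -- Step H : assemble everything
  rw [my_eval_charpoly, hdetM, hassem, hdet2, hKdet]
  have hTev : T.det = Polynomial.eval x ((G₂.adjMatrix ℝ).charpoly) := by
    rw [my_eval_charpoly]
  have hdetFS : F.det * (P' - Rm * D'⁻¹ * Rmᵀ).det = (aeval A₁ (qAux x r Γ)).det := by
    rw [← Matrix.det_mul, hFS]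
  have hgoal : (x+2)^n * (T.det ^ m * (D'.det * (P' - Rm * D'⁻¹ * Rmᵀ).det))
      = T.det ^ m * (x+2)^m * (aeval A₁ (qAux x r Γ)).det := by
    have expand : (x+2)^n * (T.det ^ m * (D'.det * (P' - Rm * D'⁻¹ * Rmᵀ).det)) * c
        = (T.det ^ m * (x+2)^m * (aeval A₁ (qAux x r Γ)).det) * c := by
      rw [← hdetFS, hdetD', hdetF]
      ring
    exact mul_right_cancel₀ hcne expand
  calc (x+2)^n * (T.det ^ m * (D'.det * (P' - Rm * D'⁻¹ * Rmᵀ).det))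
      = T.det ^ m * (x+2)^m * (aeval A₁ (qAux x r Γ)).det := hgoal
    _ = Polynomial.eval x ((G₂.adjMatrix ℝ).charpoly) ^ m * (x+2)^m *
          (aeval A₁ (qAux x r Γ)).det := by rw [hTev]

end Key

section Final

-- mapping aeval to ℂ
lemma map_aeval_matrix {n : Type*} [Fintype n] [DecidableEq n]
    (A : Matrix n n ℝ) (q : ℝ[X]) :
    (RingHom.mapMatrix (algebraMap ℝ ℂ)) (aeval A q)
      = aeval (A.map (algebraMap ℝ ℂ)) (q.map (algebraMap ℝ ℂ)) := by
  rw [Polynomial.aeval_def, Polynomial.aeval_def, Polynomial.hom_eval₂, Polynomial.eval₂_map]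
  congr 1
  ext a : 1
  ext i j
  by_cases h : i = j <;>
    simp [Matrix.algebraMap_matrix_apply, h]

lemma det_aeval_formula {n : Type*} [Fintype n] [DecidableEq n]
    (A : Matrix n n ℝ) (q : ℝ[X]) :
    algebraMap ℝ ℂ (aeval A q).det
      = (q.map (algebraMap ℝ ℂ)).leadingCoeff ^ Fintype.card n *
        (((q.map (algebraMap ℝ ℂ)).roots).map
          (fun α => (-1 : ℂ) ^ Fintype.card n *
            ((A.charpoly).map (algebraMap ℝ ℂ)).eval α)).prod := by
  classical
  set f := algebraMap ℝ ℂ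
  set Ac := A.map f
  set qc := q.map f with hqc
  have hdet : (f (aeval A q).det) = (aeval Ac qc).det := by
    rw [← map_aeval_matrix]
    exact (RingHom.map_det _ _)
  rw [hdet]
  by_cases h0 : qc = 0
  · rw [h0]
    simp only [map_zero, leadingCoeff_zero, roots_zero, Multiset.map_zero, Multiset.prod_zero,
      mul_one]
    rcases isEmpty_or_nonempty n with h | h
    · simp [Matrix.det_isEmpty, Fintype.card_eq_zero]
    · rw [Matrix.det_zero, zero_pow Fintype.card_ne_zero]
  · have hsplit : qc = C qc.leadingCoeff * (qc.roots.map (fun α => X - C α)).prod :=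
      (IsAlgClosed.splits qc).eq_prod_roots
    obtain ⟨l, hl⟩ : ∃ l : List ℂ, (l : Multiset ℂ) = qc.roots := ⟨qc.roots.toList, Multiset.coe_toList _⟩
    rw [← hl] at hsplit ⊢
    rw [Multiset.map_coe, Multiset.prod_coe] at hsplit
    have h1 : aeval Ac qc = (qc.leadingCoeff • (1 : Matrix n n ℂ)) *
        ((l.map (fun α => Ac - α • 1)).prod) := by
      conv_lhs => rw [hsplit]
      rw [_root_.map_mul]
      congr 1
      · rw [aeval_C, Algebra.algebraMap_eq_smul_one]
      · rw [map_list_prod (aeval Ac : ℂ[X] →ₐ[ℂ] Matrix n n ℂ), List.map_map]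
        congr 1
        ext α
        simp [Algebra.algebraMap_eq_smul_one]
    rw [h1, det_mul, det_smul, det_one, mul_one]
    congr 1
    have hdl : (List.map (fun α => Ac - α • 1) l).prod.det
        = Matrix.detMonoidHom (List.map (fun α => Ac - α • (1 : Matrix n n ℂ)) l).prod := rfl
    rw [hdl, map_list_prod (Matrix.detMonoidHom : Matrix n n ℂ →* ℂ),
      List.map_map, Multiset.map_coe, Multiset.prod_coe]
    refine congrArg List.prod (List.map_congr_left fun α _ => ?_)
    have h2 : Polynomial.eval α ((A.charpoly).map f) = (α • (1 : Matrix n n ℂ) - Ac).det := by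
      rw [← Matrix.charpoly_map, my_eval_charpoly]
    show (Ac - α • 1).det = (-1 : ℂ) ^ Fintype.card n * Polynomial.eval α ((A.charpoly).map f)
    rw [h2, ← Matrix.det_neg, neg_sub]

lemma det_aeval_eq_of_charpoly_eq {m n : Type*} [Fintype m] [DecidableEq m]
    [Fintype n] [DecidableEq n]
    (A : Matrix m m ℝ) (B : Matrix n n ℝ) (h : A.charpoly = B.charpoly) (q : ℝ[X]) :
    (aeval A q).det = (aeval B q).det := by
  have hcard : Fintype.card m = Fintype.card n := by
    have := congrArg Polynomial.natDegree h
    rwa [Matrix.charpoly_natDegree_eq_dim, Matrix.charpoly_natDegree_eq_dim] at this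
  have h2 : algebraMap ℝ ℂ (aeval A q).det = algebraMap ℝ ℂ (aeval B q).det := by
    rw [det_aeval_formula A q, det_aeval_formula B q, hcard, h]
  exact RingHom.injective _ h2


lemma det_aeval_eq_of_charpoly_eq' : True := trivial

lemma reg_root {V : Type*} [Fintype V] [DecidableEq V] (G : SimpleGraph V)
    [DecidableRel G.Adj] (d : ℕ) (hreg : G.IsRegularOfDegree d)
    (hpos : 0 < Fintype.card V) :
    Polynomial.eval (d : ℝ) ((G.adjMatrix ℝ).charpoly) = 0 := by
  haveI : Nonempty V := Fintype.card_pos_iff.1 hpos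
  rw [my_eval_charpoly]
  rw [← Matrix.exists_mulVec_eq_zero_iff]
  refine ⟨fun _ => (1 : ℝ), ?_, ?_⟩
  · intro h
    have := congrFun h (Classical.arbitrary V)
    simp at this
  · funext i
    simp only [Matrix.sub_mulVec, Pi.sub_apply, Matrix.smul_mulVec, Matrix.one_mulVec,
      Pi.smul_apply, smul_eq_mul, mul_one, Pi.zero_apply]
    rw [show (fun _ : V => (1:ℝ)) = Function.const V (1:ℝ) from rfl,
      SimpleGraph.adjMatrix_mulVec_const_apply_of_regular hreg]
    ring

lemma deg_le_of_cospectral {V₁ V₂ : Type*} [Fintype V₁] [DecidableEq V₁]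
    [Fintype V₂] [DecidableEq V₂]
    (G₁ : SimpleGraph V₁) (G₂ : SimpleGraph V₂) [DecidableRel G₁.Adj] [DecidableRel G₂.Adj]
    (e₁ e₂ : ℕ) (h1 : G₁.IsRegularOfDegree e₁) (h2 : G₂.IsRegularOfDegree e₂)
    (hp : 0 < Fintype.card V₁)
    (hc : (G₁.adjMatrix ℝ).charpoly = (G₂.adjMatrix ℝ).charpoly) : e₁ ≤ e₂ := by
  by_contra hlt
  push_neg at hlt
  have hcast : (e₂ : ℝ) < (e₁ : ℝ) := by exact_mod_cast hlt
  have hunit := reg_isUnit_det G₂ h2 hcast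
  have h0 : Polynomial.eval (e₁ : ℝ) ((G₂.adjMatrix ℝ).charpoly) = 0 := by
    rw [← hc]
    exact reg_root G₁ e₁ h1 hp
  rw [my_eval_charpoly] at h0
  rw [h0] at hunit
  exact hunit.ne_zero rfl

lemma deg_eq_of_cospectral {U₁ U₂ : Type*} [Fintype U₁] [DecidableEq U₁]
    [Fintype U₂] [DecidableEq U₂]
    (H₁ : SimpleGraph U₁) (H₂ : SimpleGraph U₂) [DecidableRel H₁.Adj] [DecidableRel H₂.Adj]
    (d₁ d₂ : ℕ) (hreg₁ : H₁.IsRegularOfDegree d₁) (hreg₂ : H₂.IsRegularOfDegree d₂)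
    (hpos : 0 < Fintype.card U₁) (hcard : Fintype.card U₁ = Fintype.card U₂)
    (hcos : (H₁.adjMatrix ℝ).charpoly = (H₂.adjMatrix ℝ).charpoly) : d₁ = d₂ := by
  have hpos₂ : 0 < Fintype.card U₂ := hcard ▸ hpos
  exact le_antisymm (deg_le_of_cospectral H₁ H₂ d₁ d₂ hreg₁ hreg₂ hpos hcos)
    (deg_le_of_cospectral H₂ H₁ d₂ d₁ hreg₂ hreg₁ hpos₂ hcos.symm)

lemma edge_card_eq {V : Type*} [Fintype V] [DecidableEq V] (G : SimpleGraph V)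
    [DecidableRel G.Adj] (d : ℕ) (hreg : G.IsRegularOfDegree d) :
    2 * Fintype.card G.edgeSet = Fintype.card V * d := by
  have h1 : Fintype.card G.edgeSet = G.edgeFinset.card := (Set.toFinset_card _).symm
  rw [h1, ← SimpleGraph.sum_degrees_eq_twice_card_edges]
  rw [Finset.sum_congr rfl (fun v _ => hreg v), Finset.sum_const, Finset.card_univ,
    smul_eq_mul]

lemma coronal_reg {V : Type*} [Fintype V] [DecidableEq V] (G : SimpleGraph V)
    [DecidableRel G.Adj] (d : ℕ) (hreg : G.IsRegularOfDegree d) {x : ℝ}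
    (hx : (d : ℝ) < x) :
    coronal (G.adjMatrix ℝ) x = (Fintype.card V : ℝ) / (x - d) := by
  rw [coronal]
  exact coronal_regular G hreg hx

end Final


end AUX

/-- If `H₁` and `H₂` are A-cospectral regular graphs and `H` is a regular graph, then
`H₁ ⊟_T H` and `H₂ ⊟_T H` are A-cospectral, and `H ⊟_T H₁` and `H ⊟_T H₂` are
A-cospectral. -/
theorem tEdgeCorona_A_cospectral {U₁ U₂ W : Type*}
    [Fintype U₁] [DecidableEq U₁] [Fintype U₂] [DecidableEq U₂] [Fintype W] [DecidableEq W]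
    (H₁ : SimpleGraph U₁) (H₂ : SimpleGraph U₂) (H : SimpleGraph W)
    [DecidableRel H₁.Adj] [DecidableRel H₂.Adj] [DecidableRel H.Adj]
    (d₁ d₂ d : ℕ) (hreg₁ : H₁.IsRegularOfDegree d₁) (hreg₂ : H₂.IsRegularOfDegree d₂)
    (hreg : H.IsRegularOfDegree d)
    (hcos : (H₁.adjMatrix ℝ).charpoly = (H₂.adjMatrix ℝ).charpoly) :
    ((tEdgeCorona H₁ H).adjMatrix ℝ).charpoly = ((tEdgeCorona H₂ H).adjMatrix ℝ).charpoly ∧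
    ((tEdgeCorona H H₁).adjMatrix ℝ).charpoly = ((tEdgeCorona H H₂).adjMatrix ℝ).charpoly := by
  classical
  have hcard : Fintype.card U₁ = Fintype.card U₂ := by
    have h := congrArg Polynomial.natDegree hcos
    rwa [Matrix.charpoly_natDegree_eq_dim, Matrix.charpoly_natDegree_eq_dim] at h
  set B : ℝ := 2 * d₁ + 2 * d₂ + 2 * d + 5 with hB
  have hBd : ∀ y : ℝ, y ∈ Set.Ioi B → (d₁ : ℝ) < y ∧ (d₂ : ℝ) < y ∧ (d : ℝ) < y ∧
      (d₁ : ℝ) < y + 2 - d₁ ∧ (d₂ : ℝ) < y + 2 - d₂ ∧ (d : ℝ) < y + 2 - d ∧ y + 2 ≠ 0 := by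
    intro y hy
    simp only [Set.mem_Ioi, hB] at hy
    have c1 : (0:ℝ) ≤ d₁ := Nat.cast_nonneg _
    have c2 : (0:ℝ) ≤ d₂ := Nat.cast_nonneg _
    have c3 : (0:ℝ) ≤ d := Nat.cast_nonneg _
    refine ⟨by linarith, by linarith, by linarith, by linarith, by linarith, by linarith,
      by linarith⟩
  -- coronal equality for H₁ vs H₂ on the interval
  have hΓeq : ∀ y : ℝ, y ∈ Set.Ioi B →
      coronal (H₁.adjMatrix ℝ) y = coronal (H₂.adjMatrix ℝ) y := by
    intro y hy
    obtain ⟨h1, h2, -, -, -, -, -⟩ := hBd y hy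
    rcases Nat.eq_zero_or_pos (Fintype.card U₁) with h0 | hpos
    · haveI : IsEmpty U₁ := Fintype.card_eq_zero_iff.1 h0
      haveI : IsEmpty U₂ := Fintype.card_eq_zero_iff.1 (hcard ▸ h0)
      simp [coronal]
    · have hd : d₁ = d₂ := deg_eq_of_cospectral H₁ H₂ d₁ d₂ hreg₁ hreg₂ hpos hcard hcos
      rw [coronal_reg H₁ d₁ hreg₁ h1, coronal_reg H₂ d₂ hreg₂ h2, hcard, hd]
  constructor
  · -- Part 1 : H₁ ⊟ H vs H₂ ⊟ H
    rcases Nat.eq_zero_or_pos (Fintype.card U₁) with h0 | hpos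
    · haveI : IsEmpty U₁ := Fintype.card_eq_zero_iff.1 h0
      haveI : IsEmpty U₂ := Fintype.card_eq_zero_iff.1 (hcard ▸ h0)
      haveI : IsEmpty (Sym2 U₁) := ⟨fun z => Sym2.ind (fun a _ => isEmptyElim a) z⟩
      haveI : IsEmpty (Sym2 U₂) := ⟨fun z => Sym2.ind (fun a _ => isEmptyElim a) z⟩
      rw [Matrix.charpoly, Matrix.charpoly, Matrix.det_isEmpty, Matrix.det_isEmpty]
    · have hd : d₁ = d₂ := deg_eq_of_cospectral H₁ H₂ d₁ d₂ hreg₁ hreg₂ hpos hcard hcos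
      have hm : Fintype.card H₁.edgeSet = Fintype.card H₂.edgeSet := by
        have e1 := edge_card_eq H₁ d₁ hreg₁
        have e2 := edge_card_eq H₂ d₂ hreg₂
        rw [hcard, hd] at e1
        omega
      apply Polynomial.eq_of_infinite_eval_eq
      apply Set.Infinite.mono (s := Set.Ioi B) ?_ (Set.Ioi_infinite B)
      intro y hy
      obtain ⟨h1, h2, h3, h4, h5, h6, h7⟩ := hBd y hy
      have key₁ := tec_key H₁ H d₁ hreg₁ y h7
        (reg_isUnit_det H hreg h3) (reg_isUnit_det H₁ hreg₁ h4)
      have key₂ := tec_key H₂ H d₂ hreg₂ y h7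
        (reg_isUnit_det H hreg h3) (reg_isUnit_det H₂ hreg₂ h5)
      rw [← hd] at key₂
      rw [← hcard, ← hm] at key₂
      have hdet : (aeval (H₁.adjMatrix ℝ) (qAux y d₁ (coronal (H.adjMatrix ℝ) y))).det
          = (aeval (H₂.adjMatrix ℝ) (qAux y d₁ (coronal (H.adjMatrix ℝ) y))).det :=
        det_aeval_eq_of_charpoly_eq _ _ hcos _
      rw [← hdet] at key₂
      have := key₁.trans key₂.symm
      exact mul_left_cancel₀ (pow_ne_zero _ h7) this
  · -- Part 2 : H ⊟ H₁ vs H ⊟ H₂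
    apply Polynomial.eq_of_infinite_eval_eq
    apply Set.Infinite.mono (s := Set.Ioi B) ?_ (Set.Ioi_infinite B)
    intro y hy
    obtain ⟨h1, h2, h3, h4, h5, h6, h7⟩ := hBd y hy
    have key₁ := tec_key H H₁ d hreg y h7
      (reg_isUnit_det H₁ hreg₁ h1) (reg_isUnit_det H hreg h6)
    have key₂ := tec_key H H₂ d hreg y h7
      (reg_isUnit_det H₂ hreg₂ h2) (reg_isUnit_det H hreg h6)
    rw [← hΓeq y hy, ← hcos] at key₂
    have := key₁.trans key₂.symm
    exact mul_left_cancel₀ (pow_ne_zero _ h7) this
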